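/- arXiv:2203.13575 — 3 statements merged into one kernel-verified Lean document; each statement's English description precedes it below -/
import Mathlib

section
/- Let Γ be a finite nilpotent group and Σ a subgroup of Γ. Let δ be an element of Γ such that δΣδ⁻¹ ≠ Σ. If ΣδΣ = Σδ⁻¹Σ (as double cosets), then the index |Σ : Σ ∩ δΣδ⁻¹| is even. -/
/-- The double coset ΣδΣ = {a * δ * b : a, b ∈ Σ}. -/
def doubleCoset {Γ : Type*} [Group Γ] (S : Subgroup Γ) (δ : Γ) : Set Γ :=
  {x | ∃ a ∈ S, ∃ b ∈ S, x = a * δ * b}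


private lemma even_card_of_invol {α : Type*} [DecidableEq α] (f : α → α) :
    ∀ (A : Finset α), (∀ a ∈ A, f a ∈ A) → (∀ a ∈ A, f (f a) = a) →
      (∀ a ∈ A, f a ≠ a) → Even A.card := by
  intro A
  induction A using Finset.strongInductionOn with
  | _ A ih =>
  intro hmem hinv hne
  rcases A.eq_empty_or_nonempty with rfl | ⟨a, ha⟩
  · simp
  have hfa : f a ∈ A := hmem a ha
  have hne' : f a ≠ a := hne a ha
  set B := (A.erase a).erase (f a) with hB
  have hmemB : ∀ b, b ∈ B ↔ b ∈ A ∧ b ≠ a ∧ b ≠ f a := by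
    intro b; simp only [hB, Finset.mem_erase]; tauto
  have hBsub : B ⊂ A :=
    ⟨fun b hb => ((hmemB b).1 hb).1, fun hAB => ((hmemB a).1 (hAB ha)).2.1 rfl⟩
  have hcard : A.card = B.card + 2 := by
    rw [hB, Finset.card_erase_of_mem (Finset.mem_erase.2 ⟨hne', hfa⟩),
      Finset.card_erase_of_mem ha]
    have : 1 < A.card := Finset.one_lt_card.2 ⟨a, ha, f a, hfa, Ne.symm hne'⟩
    omega
  have hEB : Even B.card := by
    apply ih B hBsub
    · intro b hb
      obtain ⟨hbA, hba, hbfa⟩ := (hmemB b).1 hb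
      refine (hmemB (f b)).2 ⟨hmem b hbA, ?_, ?_⟩
      · intro h; apply hbfa; rw [← hinv b hbA, h]
      · intro h
        apply hba
        have h2 := hinv b hbA
        rw [h, hinv a ha] at h2
        exact h2.symm
    · intro b hb; exact hinv b ((hmemB b).1 hb).1
    · intro b hb; exact hne b ((hmemB b).1 hb).1
  rw [hcard]
  exact hEB.add even_two

private lemma exists_fixed_of_odd {β : Type*} [Finite β] (f : β → β)
    (hinv : Function.Involutive f) (hodd : Odd (Nat.card β)) : ∃ b, f b = b := by
  classical
  cases nonempty_fintype β
  by_contra h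
  push_neg at h
  have : Even (Finset.univ : Finset β).card :=
    even_card_of_invol f Finset.univ (fun a _ => Finset.mem_univ _)
      (fun a _ => hinv a) (fun a _ => h a)
  rw [Finset.card_univ, ← Nat.card_eq_fintype_card] at this
  exact (Nat.not_even_iff_odd.2 hodd) this


private lemma isPGroup_zpowers_of_pow {Γ : Type*} [Group Γ] {g : Γ} {p j : ℕ}
    (h : g ^ p ^ j = 1) : IsPGroup p (Subgroup.zpowers g) := by
  intro y
  obtain ⟨i, hi⟩ := Subgroup.mem_zpowers_iff.mp y.2
  refine ⟨j, Subtype.ext ?_⟩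
  rw [SubmonoidClass.coe_pow, OneMemClass.coe_one, ← hi, ← zpow_natCast (g ^ i),
    ← zpow_mul, mul_comm, zpow_mul, zpow_natCast, h, one_zpow]

private lemma exists_split {Γ : Type*} [Group Γ] [Finite Γ] (g : Γ) (p : ℕ) (hp : p.Prime) :
    ∃ u v : Γ, g = u * v ∧ Commute u v ∧ u ∈ Subgroup.zpowers g ∧ v ∈ Subgroup.zpowers g ∧
      u ^ (p ^ (orderOf g).factorization p) = 1 ∧
      v ^ ((orderOf g) / p ^ (orderOf g).factorization p) = 1 := by
  set m := orderOf g with hm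
  have hm0 : m ≠ 0 := (orderOf_pos g).ne'
  set k := m.factorization p with hk
  set m' := m / p ^ k with hm'
  have hmm : p ^ k * m' = m := Nat.ordProj_mul_ordCompl_eq_self m p
  have hcop : Nat.Coprime (p ^ k) m' := (Nat.coprime_ordCompl hp hm0).pow_left k
  have hbez : ∃ A B : ℤ, ((p ^ k : ℕ) : ℤ) * A + ((m' : ℕ) : ℤ) * B = 1 := by
    refine ⟨Int.gcdA ((p ^ k : ℕ) : ℤ) ((m' : ℕ) : ℤ), Int.gcdB ((p ^ k : ℕ) : ℤ) ((m' : ℕ) : ℤ), ?_⟩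
    have h2 := Int.gcd_eq_gcd_ab ((p ^ k : ℕ) : ℤ) ((m' : ℕ) : ℤ)
    rw [Int.gcd_natCast_natCast, hcop] at h2
    exact_mod_cast h2.symm
  obtain ⟨A, B, hAB⟩ := hbez
  have hgm : g ^ (m : ℤ) = 1 := by
    rw [zpow_natCast, hm, pow_orderOf_eq_one]
  refine ⟨g ^ ((m' : ℤ) * B), g ^ (((p ^ k : ℕ) : ℤ) * A), ?_, ?_, ?_, ?_, ?_, ?_⟩
  · have hone : (m' : ℤ) * B + ((p ^ k : ℕ) : ℤ) * A = 1 := by linear_combination hAB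
    rw [← zpow_add, hone, zpow_one]
  · exact Commute.zpow_zpow_self g _ _
  · exact Subgroup.zpow_mem _ (Subgroup.mem_zpowers g) _
  · exact Subgroup.zpow_mem _ (Subgroup.mem_zpowers g) _
  · rw [← zpow_natCast (g ^ ((m' : ℤ) * B)), ← zpow_mul]
    have h3 : (m' : ℤ) * B * ((p ^ k : ℕ) : ℤ) = (m : ℤ) * B := by
      push_cast [← hmm]; ring
    rw [h3, zpow_mul, hgm, one_zpow]
  · rw [← zpow_natCast (g ^ (((p ^ k : ℕ) : ℤ) * A)), ← zpow_mul]
    have h3 : ((p ^ k : ℕ) : ℤ) * A * ((m' : ℕ) : ℤ) = (m : ℤ) * A := by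
      push_cast [← hmm]; ring
    rw [h3, zpow_mul, hgm, one_zpow]

private lemma commute_of_two_odd {Γ : Type*} [Group Γ] [Finite Γ] [Group.IsNilpotent Γ] :
    ∀ (n : ℕ) (x b : Γ), orderOf b ≤ n → (∃ j, x ^ (2 ^ j) = 1) → Odd (orderOf b) →
      Commute x b := by
  intro n
  induction n with
  | zero => intro x b hb _ _; have := orderOf_pos b; omega
  | succ n ih =>
    intro x b hbn hx hodd
    by_cases h1 : orderOf b = 1
    · rw [orderOf_eq_one_iff] at h1; rw [h1]; exact Commute.one_right x
    set m := orderOf b with hm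
    have hm0 : m ≠ 0 := (orderOf_pos b).ne'
    set p := m.minFac with hpdef
    have hp : p.Prime := Nat.minFac_prime h1
    haveI : Fact p.Prime := ⟨hp⟩
    haveI : Fact (Nat.Prime 2) := ⟨Nat.prime_two⟩
    have hpdvd : p ∣ m := Nat.minFac_dvd m
    obtain ⟨u, v, hguv, hcuv, humem, hvmem, hu, hv⟩ := exists_split b p hp
    have hp2 : p ≠ 2 := by
      intro h
      rw [Nat.odd_iff] at hodd
      rw [h] at hpdvd
      omega
    have hxP : IsPGroup 2 (Subgroup.zpowers x) := by
      obtain ⟨j, hj⟩ := hx; exact isPGroup_zpowers_of_pow hj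
    have huP : IsPGroup p (Subgroup.zpowers u) := isPGroup_zpowers_of_pow hu
    obtain ⟨P0, hP0⟩ := hxP.exists_le_sylow
    obtain ⟨P1, hP1⟩ := huP.exists_le_sylow
    have h01 := (isNilpotent_of_finite_tfae (G := Γ)).out 0 3
    have hnrm : ∀ (q : ℕ) (_ : Fact q.Prime) (P : Sylow q Γ), (P : Subgroup Γ).Normal :=
      h01.mp inferInstance
    have hxu : Commute x u :=
      Subgroup.commute_of_normal_of_disjoint _ _ (hnrm 2 ⟨Nat.prime_two⟩ P0) (hnrm p ⟨hp⟩ P1)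
        (IsPGroup.disjoint_of_ne 2 p (Ne.symm hp2) _ _ P0.isPGroup' P1.isPGroup')
        x u (hP0 (Subgroup.mem_zpowers x)) (hP1 (Subgroup.mem_zpowers u))
    have hk1 : 1 ≤ m.factorization p := hp.factorization_pos_of_dvd hm0 hpdvd
    have hpk1 : 1 < p ^ m.factorization p := by
      calc 1 < p := hp.one_lt
      _ ≤ p ^ m.factorization p := Nat.le_self_pow (by omega) p
    have hmdvd : (m / p ^ m.factorization p) ∣ m := Nat.div_dvd_of_dvd (Nat.ordProj_dvd m p)
    have hmm2 : p ^ m.factorization p * (m / p ^ m.factorization p) = m :=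
      Nat.ordProj_mul_ordCompl_eq_self m p
    have hm'0 : m / p ^ m.factorization p ≠ 0 := by
      intro h; rw [h, mul_zero] at hmm2; omega
    have hvdvd : orderOf v ∣ m / p ^ m.factorization p := orderOf_dvd_of_pow_eq_one hv
    have hxv : Commute x v := by
      apply ih x v ?_ hx ?_
      · have h4 : orderOf v ≤ m / p ^ m.factorization p := Nat.le_of_dvd (Nat.pos_of_ne_zero hm'0) hvdvd
        have h5 : m / p ^ m.factorization p < m := Nat.div_lt_self (by omega) hpk1
        have h6 : orderOf v < m := lt_of_le_of_lt h4 h5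
        exact Nat.lt_succ_iff.mp (lt_of_lt_of_le h6 hbn)
      · have hndvd : ¬ (2 ∣ m) := by rw [Nat.odd_iff] at hodd; omega
        rcases Nat.even_or_odd (orderOf v) with he | ho
        · exact absurd ((even_iff_two_dvd.mp he).trans (hvdvd.trans hmdvd)) hndvd
        · exact ho
    rw [hguv]
    exact hxu.mul_right hxv



private lemma card_doubleCoset {Γ : Type*} [Group Γ] [Finite Γ] (S : Subgroup Γ) (d : Γ) :
    Nat.card (doubleCoset S d) =
      (Subgroup.map (MulAut.conj d).toMonoidHom S).relIndex S * Nat.card S := by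
  classical
  set A := Subgroup.map (MulAut.conj d).toMonoidHom S with hA
  have hmemA : ∀ g, g ∈ A ↔ d⁻¹ * g * d ∈ S := by
    intro g
    constructor
    · rintro ⟨s, hs, rfl⟩
      simpa [MulAut.conj_apply, mul_assoc] using hs
    · intro h
      exact ⟨d⁻¹ * g * d, h, by simp [MulAut.conj_apply, mul_assoc]⟩
  set E : Set (Γ ⧸ S) := QuotientGroup.mk '' doubleCoset S d with hE
  have hpre : QuotientGroup.mk ⁻¹' E = doubleCoset S d := by
    apply Set.Subset.antisymm
    · intro x hx
      obtain ⟨y, ⟨a, ha, b, hb, rfl⟩, hyx⟩ := hx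
      have hmem : (a * d * b)⁻¹ * x ∈ S := QuotientGroup.eq.mp hyx
      exact ⟨a, ha, b * ((a * d * b)⁻¹ * x), S.mul_mem hb hmem, by group⟩
    · exact Set.subset_preimage_image _ _
  have hcard1 : Nat.card (doubleCoset S d) = Nat.card S * Nat.card E := by
    rw [← hpre, Nat.card_congr (QuotientGroup.preimageMkEquivSubgroupProdSet S E),
      Nat.card_prod]
  have horb : E = MulAction.orbit S (QuotientGroup.mk d : Γ ⧸ S) := by
    ext c
    constructor
    · rintro ⟨x, ⟨a, ha, b, hb, rfl⟩, rfl⟩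
      refine ⟨⟨a, ha⟩, ?_⟩
      show (a : Γ) • (QuotientGroup.mk d : Γ ⧸ S) = _
      rw [MulAction.Quotient.smul_coe]
      exact (QuotientGroup.mk_mul_of_mem (a • d) hb).symm
    · rintro ⟨⟨a, ha⟩, rfl⟩
      refine ⟨a * d * 1, ⟨a, ha, 1, S.one_mem, rfl⟩, ?_⟩
      show QuotientGroup.mk (a * d * 1) = (a : Γ) • (QuotientGroup.mk d : Γ ⧸ S)
      rw [MulAction.Quotient.smul_coe, mul_one]
      rfl
  have hstab : MulAction.stabilizer S (QuotientGroup.mk d : Γ ⧸ S) = A.subgroupOf S := by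
    ext a
    rw [MulAction.mem_stabilizer_iff, Subgroup.mem_subgroupOf, hmemA]
    show ((a : Γ) • (QuotientGroup.mk d : Γ ⧸ S) = _) ↔ _
    rw [MulAction.Quotient.smul_coe]
    show (QuotientGroup.mk ((a : Γ) * d) : Γ ⧸ S) = QuotientGroup.mk d ↔ _
    rw [QuotientGroup.eq]
    constructor
    · intro h
      have := S.inv_mem h
      simpa [mul_assoc] using this
    · intro h
      have := S.inv_mem h
      simpa [mul_assoc] using this
  have hcard2 : Nat.card E = A.relIndex S := by
    rw [horb, Nat.card_congr (MulAction.orbitEquivQuotientStabilizer S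
      (QuotientGroup.mk d : Γ ⧸ S)), hstab, Subgroup.relIndex, Subgroup.index_eq_card]
  rw [hcard1, hcard2, mul_comm]

/-- Let Γ be a finite nilpotent group and Σ a subgroup of Γ. Let δ be an element of Γ
such that δΣδ⁻¹ ≠ Σ. If ΣδΣ = Σδ⁻¹Σ, then the index |Σ : Σ ∩ δΣδ⁻¹| is even. -/
theorem stmt0 {Γ : Type*} [Group Γ] [Finite Γ] [Group.IsNilpotent Γ]
    (S : Subgroup Γ) (δ : Γ)
    (hconj : Subgroup.map (MulAut.conj δ).toMonoidHom S ≠ S)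
    (hdc : doubleCoset S δ = doubleCoset S δ⁻¹) :
    Even ((Subgroup.map (MulAut.conj δ).toMonoidHom S).relIndex S) := by
  classical
  by_contra heven
  rw [Nat.not_even_iff_odd] at heven
  set A := Subgroup.map (MulAut.conj δ).toMonoidHom S with hA
  set A' := Subgroup.map (MulAut.conj δ⁻¹).toMonoidHom S with hA'
  set n := A.relIndex S with hn
  have hmemA : ∀ g, g ∈ A ↔ δ⁻¹ * g * δ ∈ S := by
    intro g
    constructor
    · rintro ⟨s, hs, rfl⟩
      simpa [MulAut.conj_apply, mul_assoc] using hs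
    · intro h
      exact ⟨δ⁻¹ * g * δ, h, by simp [MulAut.conj_apply]; group⟩
  have hmemA' : ∀ g, g ∈ A' ↔ δ * g * δ⁻¹ ∈ S := by
    intro g
    constructor
    · rintro ⟨s, hs, rfl⟩
      simpa [MulAut.conj_apply, mul_assoc] using hs
    · intro h
      exact ⟨δ * g * δ⁻¹, h, by simp [MulAut.conj_apply]; group⟩
  haveI : Fact (Nat.Prime 2) := ⟨Nat.prime_two⟩
  obtain ⟨Q⟩ : Nonempty (Sylow 2 ↥S) := inferInstance
  have h01 := (isNilpotent_of_finite_tfae (G := ↥S)).out 0 3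
  have hnrmS : ∀ (q : ℕ) (_ : Fact q.Prime) (R : Sylow q ↥S), (R : Subgroup ↥S).Normal :=
    h01.mp inferInstance
  have hQn : (Q : Subgroup ↥S).Normal := hnrmS 2 ⟨Nat.prime_two⟩ Q
  haveI hQu : Subsingleton (Sylow 2 ↥S) := by
    haveI := Sylow.unique_of_normal Q hQn
    infer_instance
  set P : Subgroup Γ := Subgroup.map S.subtype (Q : Subgroup ↥S) with hP
  have hPle : P ≤ S := Subgroup.map_subtype_le _
  have hPp : IsPGroup 2 P := Q.isPGroup'.map S.subtype
  -- any 2-subgroup of S is contained in P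
  have key2 : ∀ W : Subgroup Γ, W ≤ S → IsPGroup 2 W → W ≤ P := by
    intro W hWS hW2
    have hW2' : IsPGroup 2 (W.subgroupOf S) := by
      intro w
      obtain ⟨j, hj⟩ := hW2 ⟨(w : ↥S), w.2⟩
      refine ⟨j, ?_⟩
      have := Subtype.ext_iff.mp hj
      rw [SubmonoidClass.coe_pow] at this
      exact Subtype.ext (Subtype.ext_iff.mpr (by
        rw [SubmonoidClass.coe_pow, OneMemClass.coe_one]
        simpa using this))
    obtain ⟨R, hR⟩ := hW2'.exists_le_sylow
    have hRQ : R = Q := Subsingleton.elim R Q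
    have hle : W.subgroupOf S ≤ (Q : Subgroup ↥S) := hRQ ▸ hR
    have h2 := Subgroup.map_mono (f := S.subtype) hle
    rwa [Subgroup.subgroupOf_map_subtype, inf_eq_left.mpr hWS] at h2
  -- odd relative index implies containing P
  have keyOdd : ∀ B : Subgroup Γ, Odd (B.relIndex S) → P ≤ B := by
    intro B hodd
    set K := B.subgroupOf S with hK
    obtain ⟨R⟩ : Nonempty (Sylow 2 ↥K) := inferInstance
    set W : Subgroup ↥S := Subgroup.map K.subtype (R : Subgroup ↥K) with hW
    have hWK : W ≤ K := Subgroup.map_subtype_le _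
    have hWp : IsPGroup 2 W := R.isPGroup'.map K.subtype
    obtain ⟨R', hR'⟩ := hWp.exists_le_sylow
    have hWQ : W ≤ (Q : Subgroup ↥S) := (Subsingleton.elim R' Q) ▸ hR'
    have hcardW : Nat.card W = Nat.card (R : Subgroup ↥K) :=
      (Nat.card_congr (Subgroup.equivMapOfInjective (R : Subgroup ↥K) K.subtype
        (Subgroup.subtype_injective K)).toEquiv).symm
    have hcR : Nat.card (R : Subgroup ↥K) = 2 ^ (Nat.card ↥K).factorization 2 :=
      Sylow.card_eq_multiplicity R
    have hcQ : Nat.card (Q : Subgroup ↥S) = 2 ^ (Nat.card ↥S).factorization 2 :=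
      Sylow.card_eq_multiplicity Q
    have hKindex : Nat.card ↥K * K.index = Nat.card ↥S := Subgroup.card_mul_index K
    have hfac : (Nat.card ↥S).factorization 2 = (Nat.card ↥K).factorization 2 := by
      have hK0 : Nat.card ↥K ≠ 0 := Nat.card_pos.ne'
      have hI0 : K.index ≠ 0 := by
        intro h
        rw [h, mul_zero] at hKindex
        exact (Nat.card_pos (α := ↥S)).ne' hKindex.symm
      have hInd : (K.index).factorization 2 = 0 := by
        apply Nat.factorization_eq_zero_of_not_dvd
        have : Odd K.index := hodd
        rw [Nat.odd_iff] at this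
        omega
      rw [← hKindex, Nat.factorization_mul hK0 hI0, Finsupp.add_apply, hInd, add_zero]
    have hcards : Nat.card (Q : Subgroup ↥S) ≤ Nat.card W := by
      rw [hcardW, hcR, hcQ, hfac]
    have hWQeq : W = (Q : Subgroup ↥S) := Subgroup.eq_of_le_of_card_ge hWQ hcards
    have hQK : (Q : Subgroup ↥S) ≤ K := hWQeq ▸ hWK
    calc P = Subgroup.map S.subtype (Q : Subgroup ↥S) := hP
    _ ≤ Subgroup.map S.subtype K := Subgroup.map_mono hQK
    _ = B ⊓ S := Subgroup.subgroupOf_map_subtype B S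
    _ ≤ B := inf_le_left
  have hPA : P ≤ A := keyOdd A heven
  -- the reverse relative index is equal
  have cardsub : ∀ B : Subgroup Γ, Nat.card (B.subgroupOf S) = Nat.card ↥(B ⊓ S) := by
    intro B
    have e := Subgroup.equivMapOfInjective (B.subgroupOf S) S.subtype
      (Subgroup.subtype_injective S)
    rw [Subgroup.subgroupOf_map_subtype] at e
    exact Nat.card_congr e.toEquiv
  have hinfeq : Nat.card ↥(A ⊓ S) = Nat.card ↥(A' ⊓ S) := by
    refine Nat.card_congr ⟨fun x => ⟨δ⁻¹ * (x : Γ) * δ, ?_⟩, fun y => ⟨δ * (y : Γ) * δ⁻¹, ?_⟩,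
      fun x => ?_, fun y => ?_⟩
    · have hx := x.2
      rw [Subgroup.mem_inf] at hx
      rw [Subgroup.mem_inf]
      refine ⟨(hmemA' _).mpr ?_, (hmemA _).mp hx.1⟩
      have hq : δ * (δ⁻¹ * (x : Γ) * δ) * δ⁻¹ = (x : Γ) := by group
      rw [hq]
      exact hx.2
    · have hy := y.2
      rw [Subgroup.mem_inf] at hy
      rw [Subgroup.mem_inf]
      refine ⟨(hmemA _).mpr ?_, (hmemA' _).mp hy.1⟩
      have hq : δ⁻¹ * (δ * (y : Γ) * δ⁻¹) * δ = (y : Γ) := by group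
      rw [hq]
      exact hy.2
    · ext
      simp only []
      group
    · ext
      simp only []
      group
  have hrelmul : ∀ B : Subgroup Γ, B.relIndex S * Nat.card ↥(B ⊓ S) = Nat.card ↥S := by
    intro B
    have := Subgroup.card_mul_index (B.subgroupOf S)
    rw [cardsub B] at this
    rw [Subgroup.relIndex, mul_comm]
    exact this
  have hninv : A'.relIndex S = n := by
    have e1 := hrelmul A
    have e2 := hrelmul A'
    rw [hinfeq] at e1
    rw [← e2] at e1
    have hpos : 0 < Nat.card ↥(A' ⊓ S) := Nat.card_pos
    exact (Nat.eq_of_mul_eq_mul_right hpos e1.symm)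
  have hPA' : P ≤ A' := keyOdd A' (by rw [hninv]; exact heven)
  -- conjugation facts for P
  have hSP : ∀ a ∈ S, ∀ p ∈ P, a * p * a⁻¹ ∈ P := by
    intro a ha p hp
    obtain ⟨q, hq, rfl⟩ := hp
    have hmem : (⟨a, ha⟩ : ↥S) * q * (⟨a, ha⟩ : ↥S)⁻¹ ∈ (Q : Subgroup ↥S) :=
      hQn.conj_mem q hq ⟨a, ha⟩
    exact ⟨_, hmem, rfl⟩
  have hδP : ∀ p ∈ P, δ * p * δ⁻¹ ∈ P := by
    have hle : Subgroup.map (MulAut.conj δ).toMonoidHom P ≤ S := by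
      rintro _ ⟨p, hp, rfl⟩
      have hmem := (hmemA' _).mp (hPA' hp)
      simpa [MulAut.conj_apply] using hmem
    have hres := key2 _ hle (hPp.map _)
    intro p hp
    exact hres ⟨p, hp, by simp [MulAut.conj_apply]⟩
  have hδ'P : ∀ p ∈ P, δ⁻¹ * p * δ ∈ P := by
    have hle : Subgroup.map (MulAut.conj δ⁻¹).toMonoidHom P ≤ S := by
      rintro _ ⟨p, hp, rfl⟩
      have hmem := (hmemA _).mp (hPA hp)
      simpa [MulAut.conj_apply] using hmem
    have hres := key2 _ hle (hPp.map _)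
    intro p hp
    have hmem : (MulAut.conj δ⁻¹).toMonoidHom p ∈ P := hres ⟨p, hp, rfl⟩
    simpa [MulAut.conj_apply, inv_inv] using hmem
  -- facts about D
  set D := doubleCoset S δ with hD
  have hDinv : ∀ x ∈ D, x⁻¹ ∈ D := by
    intro x hx
    have hmem : x⁻¹ ∈ doubleCoset S δ⁻¹ := by
      obtain ⟨a, ha, b, hb, rfl⟩ := hx
      exact ⟨b⁻¹, S.inv_mem hb, a⁻¹, S.inv_mem ha, by group⟩
    rwa [← hdc] at hmem
  have hDP : ∀ x ∈ D, ∀ p ∈ P, x * p * x⁻¹ ∈ P := by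
    rintro x ⟨a, ha, b, hb, rfl⟩ p hp
    have h1 : b * p * b⁻¹ ∈ P := hSP b hb p hp
    have h2 : δ * (b * p * b⁻¹) * δ⁻¹ ∈ P := hδP _ h1
    have h3 : a * (δ * (b * p * b⁻¹) * δ⁻¹) * a⁻¹ ∈ P := hSP a ha _ h2
    convert h3 using 1
    group
  have hDmulP : ∀ x ∈ D, ∀ p ∈ P, x * p ∈ D := by
    rintro x ⟨a, ha, b, hb, rfl⟩ p hp
    exact ⟨a, ha, b * p, S.mul_mem hb (hPle hp), by group⟩
  -- quotient by P
  set CD : Set (Γ ⧸ P) := QuotientGroup.mk '' D with hCD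
  have hpre : QuotientGroup.mk ⁻¹' CD = D := by
    apply Set.Subset.antisymm
    · intro x hx
      obtain ⟨y, hy, hyx⟩ := hx
      have hmem : y⁻¹ * x ∈ P := QuotientGroup.eq.mp hyx
      have := hDmulP y hy _ hmem
      rwa [mul_inv_cancel_left] at this
    · exact Set.subset_preimage_image _ _
  have hc1 : Nat.card D = Nat.card P * Nat.card CD := by
    rw [← hpre, Nat.card_congr (QuotientGroup.preimageMkEquivSubgroupProdSet P CD),
      Nat.card_prod]
  have hc2 : Nat.card D = n * Nat.card ↥S := card_doubleCoset S δ
  have hcS : Nat.card P * (Q : Subgroup ↥S).index = Nat.card ↥S := by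
    have h0 := Subgroup.card_mul_index (Q : Subgroup ↥S)
    have hPQ : Nat.card P = Nat.card (Q : Subgroup ↥S) :=
      (Nat.card_congr (Subgroup.equivMapOfInjective (Q : Subgroup ↥S) S.subtype
        (Subgroup.subtype_injective S)).toEquiv).symm
    rw [hPQ]
    exact h0
  have hP0 : (0 : ℕ) < Nat.card P := Nat.card_pos
  have hCDcard : Nat.card CD = n * (Q : Subgroup ↥S).index := by
    have h0 : Nat.card P * Nat.card CD = Nat.card P * (n * (Q : Subgroup ↥S).index) := by
      rw [← hc1, hc2, ← hcS]
      ring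
    exact Nat.eq_of_mul_eq_mul_left hP0 h0
  have hQiOdd : Odd (Q : Subgroup ↥S).index := by
    have hnd := Sylow.not_dvd_index Q
    rw [Nat.odd_iff]
    omega
  have hCDodd : Odd (Nat.card CD) := by
    rw [hCDcard]
    exact heven.mul hQiOdd
  -- the inversion map on CD
  have houtD : ∀ c ∈ CD, (Quotient.out c : Γ) ∈ D := by
    intro c hc
    have hmem : QuotientGroup.mk (Quotient.out c) ∈ CD := by
      rw [QuotientGroup.out_eq']
      exact hc
    rw [← hpre]
    exact hmem
  set f : Γ ⧸ P → Γ ⧸ P := fun c => QuotientGroup.mk ((Quotient.out c)⁻¹) with hf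
  have hfmem : ∀ c ∈ CD, f c ∈ CD :=
    fun c hc => ⟨(Quotient.out c)⁻¹, hDinv _ (houtD c hc), rfl⟩
  have hfinv : ∀ c ∈ CD, f (f c) = c := by
    intro c hc
    set x := Quotient.out c with hx
    have hxD : x ∈ D := houtD c hc
    set y := Quotient.out (f c) with hy
    have h1 : QuotientGroup.mk y = (QuotientGroup.mk (x⁻¹) : Γ ⧸ P) := QuotientGroup.out_eq' _
    have h2 : y⁻¹ * x⁻¹ ∈ P := QuotientGroup.eq.mp h1
    have h3 : x * y ∈ P := by
      have := P.inv_mem h2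
      simpa using this
    have h4 : x⁻¹ * (x * y) * x⁻¹⁻¹ ∈ P := hDP x⁻¹ (hDinv x hxD) _ h3
    have h5 : y * x ∈ P := by
      rw [inv_inv, inv_mul_cancel_left] at h4
      exact h4
    show QuotientGroup.mk (y⁻¹) = c
    rw [← QuotientGroup.out_eq' c, QuotientGroup.eq, inv_inv]
    exact h5
  -- fixed point
  obtain ⟨c, hc, hfc⟩ : ∃ c ∈ CD, f c = c := by
    have hsub : ∃ b : ↥CD, (fun (b : ↥CD) => (⟨f b, hfmem b b.2⟩ : ↥CD)) b = b := by
      apply exists_fixed_of_odd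
      · intro b
        exact Subtype.ext (hfinv b b.2)
      · exact hCDodd
    obtain ⟨⟨c, hc⟩, hb⟩ := hsub
    exact ⟨c, hc, congrArg Subtype.val hb⟩
  set x := Quotient.out c with hxdef
  have hxD : x ∈ D := houtD c hc
  have hx2P : x * x ∈ P := by
    have h1 : (QuotientGroup.mk (x⁻¹) : Γ ⧸ P) = QuotientGroup.mk x := by
      have e1 : (QuotientGroup.mk x : Γ ⧸ P) = c := QuotientGroup.out_eq' c
      have e2 : (QuotientGroup.mk (x⁻¹) : Γ ⧸ P) = c := hfc
      rw [e1, e2]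
    have := QuotientGroup.eq.mp h1
    simpa [inv_inv] using this
  have hx2elt : ∃ j, x ^ (2 ^ j) = 1 := by
    obtain ⟨j, hj⟩ := hPp ⟨x * x, hx2P⟩
    refine ⟨j + 1, ?_⟩
    have hcoe : (x * x) ^ (2 ^ j) = 1 := by
      have := Subtype.ext_iff.mp hj
      rwa [SubmonoidClass.coe_pow, OneMemClass.coe_one] at this
    have hexp : 2 ^ (j + 1) = 2 * 2 ^ j := by ring
    rw [hexp, pow_mul, pow_two]
    exact hcoe
  -- x conjugates S into S
  have hconjS : ∀ z, z ∈ D → (∃ j, z ^ (2 ^ j) = 1) → ∀ s ∈ S, z * s * z⁻¹ ∈ S := by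
    intro z hzD hz2 s hs
    obtain ⟨u, v, hsuv, hcuv, humem, hvmem, hu, hv⟩ := exists_split s 2 Nat.prime_two
    have huS : u ∈ S := (Subgroup.zpowers_le.mpr hs) humem
    have hvS : v ∈ S := (Subgroup.zpowers_le.mpr hs) hvmem
    have huP : u ∈ P := by
      have hle : Subgroup.zpowers u ≤ P :=
        key2 _ (Subgroup.zpowers_le.mpr huS) (isPGroup_zpowers_of_pow hu)
      exact hle (Subgroup.mem_zpowers u)
    have hvodd : Odd (orderOf v) := by
      have hvdvd : orderOf v ∣ orderOf s / 2 ^ (orderOf s).factorization 2 :=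
        orderOf_dvd_of_pow_eq_one hv
      have hnd : ¬ 2 ∣ (orderOf s / 2 ^ (orderOf s).factorization 2) :=
        Nat.not_dvd_ordCompl Nat.prime_two (orderOf_pos s).ne'
      rcases Nat.even_or_odd (orderOf v) with he | ho
      · exact absurd ((even_iff_two_dvd.mp he).trans hvdvd) hnd
      · exact ho
    have hczv : Commute z v := commute_of_two_odd (orderOf v) z v le_rfl hz2 hvodd
    have hzu : z * u * z⁻¹ ∈ P := hDP z hzD u huP
    have heq : z * s * z⁻¹ = (z * u * z⁻¹) * v := by
      rw [hsuv]
      have h2 : z * v * z⁻¹ = v := by rw [hczv.eq, mul_inv_cancel_right]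
      calc z * (u * v) * z⁻¹ = (z * u * z⁻¹) * (z * v * z⁻¹) := by group
      _ = (z * u * z⁻¹) * v := by rw [h2]
    rw [heq]
    exact S.mul_mem (hPle hzu) hvS
  have hx'2elt : ∃ j, x⁻¹ ^ (2 ^ j) = 1 := by
    obtain ⟨j, hj⟩ := hx2elt
    exact ⟨j, by rw [inv_pow, hj, inv_one]⟩
  have hx'D : x⁻¹ ∈ D := hDinv x hxD
  -- conclude
  obtain ⟨a, ha, b, hb, hxab⟩ := hxD
  apply hconj
  apply le_antisymm
  · rintro _ ⟨s, hs, rfl⟩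
    show (MulAut.conj δ) s ∈ S
    rw [MulAut.conj_apply]
    have h1 : b⁻¹ * s * b ∈ S := S.mul_mem (S.mul_mem (S.inv_mem hb) hs) hb
    have h2 : x * (b⁻¹ * s * b) * x⁻¹ ∈ S := hconjS x (by rw [hxdef]; exact houtD c hc) hx2elt _ h1
    have h3 : a⁻¹ * (x * (b⁻¹ * s * b) * x⁻¹) * a ∈ S :=
      S.mul_mem (S.mul_mem (S.inv_mem ha) h2) ha
    have heq : δ * s * δ⁻¹ = a⁻¹ * (x * (b⁻¹ * s * b) * x⁻¹) * a := by
      rw [hxab]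
      group
    rw [heq]
    exact h3
  · intro g hg
    refine ⟨δ⁻¹ * g * δ, ?_, ?_⟩
    swap
    · show (MulAut.conj δ) (δ⁻¹ * g * δ) = g
      rw [MulAut.conj_apply]
      group
    have h1 : a * g * a⁻¹ ∈ S := S.mul_mem (S.mul_mem ha hg) (S.inv_mem ha)
    have h2 : x⁻¹ * (a * g * a⁻¹) * x⁻¹⁻¹ ∈ S := hconjS x⁻¹ hx'D hx'2elt _ h1
    rw [inv_inv] at h2
    have h3 : b * (x⁻¹ * (a * g * a⁻¹) * x) * b⁻¹ ∈ S :=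
      S.mul_mem (S.mul_mem hb h2) (S.inv_mem hb)
    have heq : δ⁻¹ * g * δ = b * (x⁻¹ * (a * g * a⁻¹) * x) * b⁻¹ := by
      rw [hxab]
      group
    rw [heq]
    exact h3
end

section
/- Let Γ be a finite nilpotent group and Σ a subgroup with ΣδΣ = Σδ⁻¹Σ for some δ ∈ Γ. Then there exists an element μ in a Sylow 2-subgroup of Γ such that μΣμ⁻¹ = δΣδ⁻¹. Consequently |Σ : Σ ∩ δΣδ⁻¹| is a power of 2. -/
/-- If `g⁻¹ * h ∈ S`, then conjugation of `S` by `g` and by `h` agree. -/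
private lemma conj_map_eq {Γ : Type*} [Group Γ] (S : Subgroup Γ) {g h : Γ}
    (hgh : g⁻¹ * h ∈ S) :
    Subgroup.map (MulAut.conj g).toMonoidHom S = Subgroup.map (MulAut.conj h).toMonoidHom S := by
  ext x
  simp only [Subgroup.mem_map, MulEquiv.coe_toMonoidHom, MulAut.conj_apply]
  constructor
  · rintro ⟨s, hs, rfl⟩
    refine ⟨(g⁻¹ * h)⁻¹ * s * (g⁻¹ * h), S.mul_mem (S.mul_mem (S.inv_mem hgh) hs) hgh, ?_⟩
    group
  · rintro ⟨s, hs, rfl⟩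
    refine ⟨(g⁻¹ * h) * s * (g⁻¹ * h)⁻¹, S.mul_mem (S.mul_mem hgh hs) (S.inv_mem hgh), ?_⟩
    group

/-- The cyclic group generated by an element killed by `p ^ k` is a `p`-group. -/
private lemma isPGroup_zpowers' {Γ : Type*} [Group Γ] {p : ℕ} {g : Γ} {k : ℕ}
    (h : g ^ p ^ k = 1) : IsPGroup p (Subgroup.zpowers g) := by
  intro y
  obtain ⟨j, hj⟩ := Subgroup.mem_zpowers_iff.mp y.2
  refine ⟨k, ?_⟩
  have : ((y ^ p ^ k : Subgroup.zpowers g) : Γ) = 1 := by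
    rw [SubgroupClass.coe_pow, ← hj, ← zpow_natCast, ← zpow_mul, mul_comm, zpow_mul,
      zpow_natCast, h, one_zpow]
  exact Subtype.ext (by simpa using this)

/-- Let Γ be a finite nilpotent group and Σ a subgroup with ΣδΣ = Σδ⁻¹Σ for some δ ∈ Γ.
Then there exists an element μ in a Sylow 2-subgroup of Γ such that μΣμ⁻¹ = δΣδ⁻¹.
Consequently |Σ : Σ ∩ δΣδ⁻¹| is a power of 2. -/
theorem stmt1 {Γ : Type*} [Group Γ] [Finite Γ] [Group.IsNilpotent Γ]
    (S : Subgroup Γ) (δ : Γ) (P : Sylow 2 Γ)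
    (hdc : doubleCoset S δ = doubleCoset S δ⁻¹) :
    (∃ μ ∈ P, Subgroup.map (MulAut.conj μ).toMonoidHom S =
        Subgroup.map (MulAut.conj δ).toMonoidHom S) ∧
      ∃ n : ℕ, (Subgroup.map (MulAut.conj δ).toMonoidHom S).relIndex S = 2 ^ n := by
  classical
  -- all Sylow subgroups of Γ are normal
  have hnormal := ((isNilpotent_of_finite_tfae (G := Γ)).out 0 3).mp
    (inferInstance : Group.IsNilpotent Γ)
  -- extract a, b with δ⁻¹ = a * δ * b
  have hδ : δ⁻¹ ∈ doubleCoset S δ := by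
    rw [hdc]
    exact ⟨1, S.one_mem, 1, S.one_mem, by group⟩
  obtain ⟨a, ha, b, hb, hab⟩ := hδ
  set x := δ * b with hx
  -- x² ∈ S
  have hxinv : x⁻¹ = (b⁻¹ * a) * x := by
    rw [hx, mul_inv_rev, hab]; group
  have hs2 : x * x ∈ S := by
    have h2 : x⁻¹ * x⁻¹ = b⁻¹ * a := by
      nth_rewrite 1 [hxinv]
      group
    have h1 : x * x = (b⁻¹ * a)⁻¹ := by
      rw [← h2, mul_inv_rev, inv_inv]
    rw [h1]
    exact S.inv_mem (S.mul_mem (S.inv_mem hb) ha)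
  -- order decomposition
  have hn0 : orderOf x ≠ 0 := (orderOf_pos x).ne'
  set n := orderOf x with hn
  set v := n.factorization 2 with hv
  set m := n / 2 ^ n.factorization 2 with hm
  have hmn : 2 ^ v * m = n := Nat.ordProj_mul_ordCompl_eq_self n 2
  have hmodd : ¬ 2 ∣ m := Nat.not_dvd_ordCompl Nat.prime_two hn0
  set μ := (x ^ m)⁻¹ with hμ
  -- μ⁻¹ * x ∈ S
  have hmev : 2 ∣ m + 1 := by
    rcases Nat.even_or_odd m with he | ho
    · exact absurd he.two_dvd hmodd
    · exact (Nat.even_add_one.mpr (Nat.not_even_iff_odd.mpr ho)).two_dvd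
  obtain ⟨k, hk⟩ := hmev
  have hμx : μ⁻¹ * x ∈ S := by
    have : μ⁻¹ * x = (x * x) ^ k := by
      rw [hμ, inv_inv, ← pow_succ x m, hk, ← sq, ← pow_mul]
    rw [this]
    exact S.pow_mem hs2 k
  -- μ has 2-power order, hence lies in P
  have hμord : μ ^ 2 ^ v = 1 := by
    rw [hμ, inv_pow, ← pow_mul, mul_comm m, hmn]
    simp [hn, pow_orderOf_eq_one]
  have hμP : μ ∈ P := by
    have hpg : IsPGroup 2 (Subgroup.zpowers μ) := isPGroup_zpowers' hμord
    obtain ⟨Q, hQ⟩ := hpg.exists_le_sylow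
    haveI := Sylow.unique_of_normal Q (hnormal 2 ⟨Nat.prime_two⟩ Q)
    have : Q = P := Subsingleton.elim Q P
    exact this ▸ hQ (Subgroup.mem_zpowers μ)
  -- conjugation by δ equals conjugation by x equals conjugation by μ
  have hδx : δ⁻¹ * x ∈ S := by rw [hx]; simpa using hb
  have hconj : Subgroup.map (MulAut.conj μ).toMonoidHom S =
      Subgroup.map (MulAut.conj δ).toMonoidHom S :=
    (conj_map_eq S hμx).trans (conj_map_eq S hδx).symm
  refine ⟨⟨μ, hμP, hconj⟩, ?_⟩
  -- second part: the relative index is a power of 2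
  set T := Subgroup.map (MulAut.conj δ).toMonoidHom S with hT
  set r := T.relIndex S with hr
  have hr0 : r ≠ 0 := by
    rw [hr, Subgroup.relIndex]
    exact Subgroup.index_ne_zero_of_finite
  -- every odd-prime Sylow of S lies in T
  have hodd : ∀ p : ℕ, p.Prime → p ∣ r → p = 2 := by
    intro p hp hpr
    by_contra hp2
    haveI : Fact p.Prime := ⟨hp⟩
    obtain ⟨Q⟩ : Nonempty (Sylow p S) := inferInstance
    -- Q ≤ T.subgroupOf S
    have hle : (Q : Subgroup S) ≤ T.subgroupOf S := by
      intro q hq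
      rw [Subgroup.mem_subgroupOf]
      obtain ⟨kq, hkq⟩ := Q.isPGroup' ⟨q, hq⟩
      have hq1 : (q : Γ) ^ p ^ kq = 1 := by
        have := congrArg (fun z : (Q : Subgroup S) => ((z : S) : Γ)) hkq
        simpa using this
      have hpgq : IsPGroup p (Subgroup.zpowers (q : Γ)) := isPGroup_zpowers' hq1
      obtain ⟨R, hR⟩ := hpgq.exists_le_sylow
      have hcomm : Commute μ (q : Γ) :=
        Subgroup.commute_of_normal_of_disjoint (P : Subgroup Γ) (R : Subgroup Γ)
          (hnormal 2 ⟨Nat.prime_two⟩ P) (hnormal p ⟨hp⟩ R)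
          (IsPGroup.disjoint_of_ne 2 p (fun h => hp2 h.symm) _ _ P.isPGroup' R.isPGroup')
          μ (q : Γ) hμP (hR (Subgroup.mem_zpowers _))
      -- q = μ * q * μ⁻¹ ∈ T
      refine hconj.le ⟨(q : Γ), q.2, ?_⟩
      simp only [MulEquiv.coe_toMonoidHom, MulAut.conj_apply]
      rw [hcomm.eq]
      group
    have hdvd : (T.subgroupOf S).index ∣ (Q : Subgroup S).index :=
      Subgroup.index_dvd_of_le hle
    have : p ∣ (Q : Subgroup S).index := dvd_trans hpr hdvd
    exact Q.not_dvd_index this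
  -- conclude r is a power of 2
  refine ⟨r.factorization 2, ?_⟩
  have hcompl : r / 2 ^ r.factorization 2 = 1 := by
    rw [Nat.eq_one_iff_not_exists_prime_dvd]
    intro p hp hpd
    have hpdr : p ∣ r := hpd.trans (Nat.ordCompl_dvd r 2)
    have := hodd p hp hpdr
    subst this
    exact Nat.not_dvd_ordCompl Nat.prime_two hr0 hpd
  calc r = 2 ^ r.factorization 2 * (r / 2 ^ r.factorization 2) :=
        (Nat.ordProj_mul_ordCompl_eq_self r 2).symm
    _ = 2 ^ r.factorization 2 := by rw [hcompl, mul_one]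
end

section
/- If a finite graph G is a multicover of a graph G̃ and G̃ admits a nowhere-zero k-flow for some k ≥ 2, then G admits a nowhere-zero k-flow. -/
/-- A multigraph: an abstract edge set `E` together with an assignment of an unordered
pair of end-vertices to each edge. Loops and parallel edges are allowed. -/
structure Multigraph (V E : Type*) where
  ends : E → Sym2 V

namespace Multigraph

variable {V E : Type*}

/-- A multigraph is loopless if no edge is a loop. -/
def Loopless (G : Multigraph V E) : Prop := ∀ e, ¬ (G.ends e).IsDiag

/-- Two vertices are adjacent if some edge joins them. -/
def Adj (G : Multigraph V E) (v w : V) : Prop := ∃ e, G.ends e = s(v, w)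

/-- A multigraph is connected if any two vertices are joined by a walk. -/
def Connected (G : Multigraph V E) : Prop := ∀ v w : V, Relation.ReflTransGen G.Adj v w

open Classical in
/-- The number of times edge `e` is incident with vertex `v` (a loop counts twice). -/
noncomputable def incCount (G : Multigraph V E) (v : V) (e : E) : ℕ :=
  if G.ends e = Sym2.diag v then 2 else if v ∈ G.ends e then 1 else 0

/-- The degree of a vertex. -/
noncomputable def degree (G : Multigraph V E) [Fintype E] (v : V) : ℕ :=
  ∑ e, G.incCount v e

open Classical in
/-- The degree of a vertex in the spanning subgraph with edge set `S`. -/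
noncomputable def degreeIn (G : Multigraph V E) [Fintype E] (S : Set E) (v : V) : ℕ :=
  ∑ e, if e ∈ S then G.incCount v e else 0

/-- An orientation of a multigraph: each edge gets a tail and a head realizing its ends. -/
structure Orientation (G : Multigraph V E) where
  tail : E → V
  head : E → V
  consistent : ∀ e, G.ends e = s(tail e, head e)

open Classical in
/-- Sum of `φ` over the edges with tail `v`. -/
noncomputable def outflow [Fintype E] {G : Multigraph V E} (D : G.Orientation)
    (φ : E → ℤ) (v : V) : ℤ :=
  ∑ e, if D.tail e = v then φ e else 0

open Classical in
/-- Sum of `φ` over the edges with head `v`. -/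
noncomputable def inflow [Fintype E] {G : Multigraph V E} (D : G.Orientation)
    (φ : E → ℤ) (v : V) : ℤ :=
  ∑ e, if D.head e = v then φ e else 0

/-- `(D, φ)` is a `k`-flow: all values have absolute value `< k` and flow is conserved. -/
def IsFlow [Fintype E] {G : Multigraph V E} (D : G.Orientation) (φ : E → ℤ) (k : ℕ) : Prop :=
  (∀ e, |φ e| < (k : ℤ)) ∧ ∀ v : V, outflow D φ v = inflow D φ v

/-- `G` admits a nowhere-zero `k`-flow. -/
def HasNowhereZeroFlow (G : Multigraph V E) [Fintype E] (k : ℕ) : Prop :=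
  ∃ (D : G.Orientation) (φ : E → ℤ), IsFlow D φ k ∧ ∀ e, φ e ≠ 0

/-- The automorphism group of a multigraph, as a subgroup of `Perm V × Perm E`:
pairs of permutations compatible with the incidence structure. -/
def aut (G : Multigraph V E) : Subgroup (Equiv.Perm V × Equiv.Perm E) where
  carrier := {p | ∀ e, G.ends (p.2 e) = (G.ends e).map p.1}
  one_mem' := by
    intro e
    simp
  mul_mem' := by
    intro p q hp hq e
    have h1 := hp (q.2 e)
    have h2 := hq e
    simp only [Prod.snd_mul, Prod.fst_mul, Equiv.Perm.mul_apply, Equiv.Perm.coe_mul]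
    rw [h1, h2, Sym2.map_map]
  inv_mem' := by
    intro p hp e
    have h := hp ((p.2)⁻¹ e)
    simp only [Equiv.Perm.coe_inv, Equiv.apply_symm_apply] at h
    rw [Prod.snd_inv, Prod.fst_inv, h, Sym2.map_map]
    have : (⇑(p.1)⁻¹ ∘ ⇑p.1) = id := by
      ext x; simp
    rw [this, Sym2.map_id, id_eq]
    rfl

end Multigraph

open Multigraph in
/-- If a finite graph G is a multicover of a (loopless) graph G' and G' admits a
nowhere-zero k-flow for some k ≥ 2, then G admits a nowhere-zero k-flow. -/
theorem stmt8 {V E V' E' : Type*} [Fintype E] [Fintype E']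
    (G : Multigraph V E) (G' : Multigraph V' E')
    (hloopless : G'.Loopless)
    (fV : V → V') (fE : E → E')
    (hhom : ∀ e, G'.ends (fE e) = (G.ends e).map fV)
    (hsurjV : Function.Surjective fV) (hsurjE : Function.Surjective fE)
    (ℓ : ℕ) (hl : 1 ≤ ℓ)
    (hmulti : ∀ (v : V) (e' : E'), fV v ∈ G'.ends e' →
      Nat.card {e : E // fE e = e' ∧ v ∈ G.ends e} = ℓ)
    (k : ℕ) (hk : 2 ≤ k)
    (hflow : G'.HasNowhereZeroFlow k) :
    G.HasNowhereZeroFlow k := by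
  classical
  obtain ⟨D', φ', ⟨hbound, hcons⟩, hnz⟩ := hflow
  have hne' : ∀ e' : E', D'.tail e' ≠ D'.head e' := by
    intro e' hh
    apply hloopless e'
    rw [D'.consistent e', hh]
    exact Sym2.mk_isDiag_iff.mpr rfl
  have hex : ∀ e : E, ∃ a b : V, G.ends e = s(a, b) ∧
      fV a = D'.tail (fE e) ∧ fV b = D'.head (fE e) := by
    intro e
    obtain ⟨a, b, hab⟩ : ∃ x y, G.ends e = s(x, y) := Sym2.exists.mp ⟨G.ends e, rfl⟩
    have h1 : s(D'.tail (fE e), D'.head (fE e)) = s(fV a, fV b) := by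
      rw [← D'.consistent, hhom, hab, Sym2.map_pair_eq]
    rcases Sym2.eq_iff.mp h1 with ⟨h2, h3⟩ | ⟨h2, h3⟩
    · exact ⟨a, b, hab, h2.symm, h3.symm⟩
    · exact ⟨b, a, hab.trans Sym2.eq_swap, h2.symm, h3.symm⟩
  set Dt : E → V := fun e => (hex e).choose with hDt
  have hspec : ∀ e : E, ∃ b : V, G.ends e = s(Dt e, b) ∧
      fV (Dt e) = D'.tail (fE e) ∧ fV b = D'.head (fE e) := fun e => (hex e).choose_spec
  set Dh : E → V := fun e => (hspec e).choose with hDh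
  have hspec2 : ∀ e : E, G.ends e = s(Dt e, Dh e) ∧
      fV (Dt e) = D'.tail (fE e) ∧ fV (Dh e) = D'.head (fE e) := fun e => (hspec e).choose_spec
  set D : G.Orientation := ⟨Dt, Dh, fun e => (hspec2 e).1⟩ with hD
  set φ : E → ℤ := fun e => φ' (fE e) with hφ
  -- main computation lemma, abstracting over tail/head
  have main : ∀ (t : E → V) (t' : E' → V'),
      (∀ e, fV (t e) = t' (fE e)) →
      (∀ e, t e ∈ G.ends e) →
      (∀ (e : E) (v : V), v ∈ G.ends e → fV v = t' (fE e) → t e = v) →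
      (∀ e', t' e' ∈ G'.ends e') →
      ∀ v : V, (∑ e, if t e = v then φ' (fE e) else 0)
        = (ℓ : ℤ) * ∑ e', if t' e' = fV v then φ' e' else 0 := by
    intro t t' hcomm hmem huniq hmem' v
    rw [← Fintype.sum_fiberwise fE (fun e => if t e = v then φ' (fE e) else 0),
      Finset.mul_sum]
    refine Finset.sum_congr rfl fun e' _ => ?_
    have hsub : ∀ x : {e // fE e = e'},
        (if t x.1 = v then φ' (fE x.1) else 0) = (if t x.1 = v then φ' e' else 0) := by
      intro x; rw [x.2]
    rw [Finset.sum_congr rfl (fun x _ => hsub x)]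
    have hcardsum : (∑ x : {e // fE e = e'}, if t x.1 = v then φ' e' else 0)
        = ((Finset.univ.filter fun x : {e // fE e = e'} => t x.1 = v).card : ℤ) * φ' e' := by
      rw [Finset.sum_ite, Finset.sum_const, Finset.sum_const_zero, add_zero, nsmul_eq_mul]
    rw [hcardsum]
    by_cases h : t' e' = fV v
    · rw [if_pos h]
      have hiff : ∀ x : {e // fE e = e'}, t x.1 = v ↔ v ∈ G.ends x.1 := by
        intro x
        constructor
        · intro hh; rw [← hh]; exact hmem x.1
        · intro hv; exact huniq x.1 v hv (by rw [x.2, ← h])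
      have hcard : (Finset.univ.filter fun x : {e // fE e = e'} => t x.1 = v).card = ℓ := by
        rw [← Fintype.card_subtype]
        rw [Fintype.card_congr (Equiv.subtypeEquivRight hiff)]
        rw [Fintype.card_congr (Equiv.subtypeSubtypeEquivSubtypeInter
          (fun e => fE e = e') (fun e => v ∈ G.ends e))]
        rw [← Nat.card_eq_fintype_card]
        exact hmulti v e' (h ▸ hmem' e')
      rw [hcard]
    · rw [if_neg h]
      have hempty : (Finset.univ.filter fun x : {e // fE e = e'} => t x.1 = v).card = 0 := by
        rw [Finset.card_eq_zero, Finset.filter_eq_empty_iff]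
        intro x _ hx
        apply h
        rw [← x.2, ← hcomm x.1, hx]
      rw [hempty]
      simp
  refine ⟨D, φ, ⟨fun e => hbound (fE e), fun v => ?_⟩, fun e => hnz (fE e)⟩
  have htail := main D.tail D'.tail (fun e => (hspec2 e).2.1)
    (fun e => by rw [(hspec2 e).1]; exact Sym2.mem_mk_left _ _)
    (fun e v hv hfv => by
      rw [(hspec2 e).1, Sym2.mem_iff] at hv
      rcases hv with hv | hv
      · exact hv.symm
      · exfalso
        apply hne' (fE e)
        rw [← hfv, hv]
        exact (hspec2 e).2.2)
    (fun e' => by rw [D'.consistent e']; exact Sym2.mem_mk_left _ _) v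
  have hhead := main D.head D'.head (fun e => (hspec2 e).2.2)
    (fun e => by rw [(hspec2 e).1]; exact Sym2.mem_mk_right _ _)
    (fun e v hv hfv => by
      rw [(hspec2 e).1, Sym2.mem_iff] at hv
      rcases hv with hv | hv
      · exfalso
        apply hne' (fE e)
        rw [← hfv, hv]
        exact ((hspec2 e).2.1).symm
      · exact hv.symm)
    (fun e' => by rw [D'.consistent e']; exact Sym2.mem_mk_right _ _) v
  calc Multigraph.outflow D φ v = (ℓ : ℤ) * Multigraph.outflow D' φ' (fV v) := htail
    _ = (ℓ : ℤ) * Multigraph.inflow D' φ' (fV v) := by rw [hcons]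
    _ = Multigraph.inflow D φ v := hhead.symm
end
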